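/- Let r ≥ 1, and let α and β be Dyck paths such that β begins with UU, α ends with DD, and either α contains an occurrence of the factor DDD, or there exist positions i < j in α such that DD occurs at position i and UUDD occurs at position j. Then the path α (UD)^r UU β (which is a ballot path ending at height 2) is UDU-equivalent to some Dyck path. -/

import Mathlib

/-- A path is a list of steps: `true` is an up-step U, `false` is a down-step D. -/
abbrev Step := Bool

/-- The height of the `j`-th lattice point of the path `p`. -/
def pathHeight (p : List Bool) (j : ℕ) : ℤ :=
  ((p.take j).count true : ℤ) - ((p.take j).count false : ℤ)

/-- A ballot path: every prefix has at least as many U's as D's. -/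
def IsBallot (p : List Bool) : Prop :=
  ∀ k : ℕ, (p.take k).count false ≤ (p.take k).count true

/-- A Dyck path: a ballot path with equally many U's and D's. -/
def IsDyck (p : List Bool) : Prop :=
  IsBallot p ∧ p.count true = p.count false

/-- The string `τ` occurs at (0-indexed) position `i` of the path `p`. -/
def OccursAt (τ p : List Bool) (i : ℕ) : Prop :=
  (p.drop i).take τ.length = τ

/-- Two paths are `τ`-equivalent: same length and occurrences of `τ` at the same positions. -/
def PathEquiv (τ p q : List Bool) : Prop :=
  p.length = q.length ∧ ∀ i : ℕ, OccursAt τ p i ↔ OccursAt τ q i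

/-- The setoid of `τ`-equivalence on ballot paths of length `n`. -/
def ballotSetoid (τ : List Bool) (n : ℕ) :
    Setoid {p : List Bool // IsBallot p ∧ p.length = n} where
  r p q := PathEquiv τ p.1 q.1
  iseqv := ⟨fun _ => ⟨rfl, fun _ => Iff.rfl⟩,
            fun h => ⟨h.1.symm, fun i => (h.2 i).symm⟩,
            fun h1 h2 => ⟨h1.1.trans h2.1, fun i => (h1.2 i).trans (h2.2 i)⟩⟩

/-- The number of `τ`-equivalence classes of ballot paths of length `n`. -/
noncomputable def numBallotClasses (τ : List Bool) (n : ℕ) : ℕ :=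
  Nat.card (Quotient (ballotSetoid τ n))

/-- The setoid of `τ`-equivalence on Dyck paths of semilength `n`. -/
def dyckSetoid (τ : List Bool) (n : ℕ) :
    Setoid {p : List Bool // IsDyck p ∧ p.length = 2 * n} where
  r p q := PathEquiv τ p.1 q.1
  iseqv := ⟨fun _ => ⟨rfl, fun _ => Iff.rfl⟩,
            fun h => ⟨h.1.symm, fun i => (h.2 i).symm⟩,
            fun h1 h2 => ⟨h1.1.trans h2.1, fun i => (h1.2 i).trans (h2.2 i)⟩⟩

/-- The number of `τ`-equivalence classes of Dyck paths of semilength `n`. -/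
noncomputable def numDyckClasses (τ : List Bool) (n : ℕ) : ℕ :=
  Nat.card (Quotient (dyckSetoid τ n))

namespace UduAux

lemma take2_iff (l : List Bool) (a b : Bool) :
    l.take 2 = [a, b] ↔ l[0]? = some a ∧ l[1]? = some b := by
  match l with
  | [] => simp
  | [x] => simp
  | x :: y :: t => simp [List.take_succ_cons, and_assoc]

lemma take3_iff (l : List Bool) (a b c : Bool) :
    l.take 3 = [a, b, c] ↔ l[0]? = some a ∧ l[1]? = some b ∧ l[2]? = some c := by
  match l with
  | [] => simp
  | [x] => simp
  | [x, y] => simp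
  | x :: y :: z :: t => simp [List.take_succ_cons, and_assoc]

lemma take4_iff (l : List Bool) (a b c d : Bool) :
    l.take 4 = [a, b, c, d] ↔
      l[0]? = some a ∧ l[1]? = some b ∧ l[2]? = some c ∧ l[3]? = some d := by
  match l with
  | [] => simp
  | [x] => simp
  | [x, y] => simp
  | [x, y, z] => simp
  | x :: y :: z :: w :: t => simp [List.take_succ_cons, and_assoc]

lemma occursAt3_iff (p : List Bool) (i : ℕ) (a b c : Bool) :
    OccursAt [a, b, c] p i ↔
      p[i]? = some a ∧ p[i + 1]? = some b ∧ p[i + 2]? = some c := by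
  unfold OccursAt
  rw [show ([a, b, c] : List Bool).length = 3 from rfl, take3_iff]
  simp [List.getElem?_drop]

lemma occursAt2_iff (p : List Bool) (i : ℕ) (a b : Bool) :
    OccursAt [a, b] p i ↔ p[i]? = some a ∧ p[i + 1]? = some b := by
  unfold OccursAt
  rw [show ([a, b] : List Bool).length = 2 from rfl, take2_iff]
  simp [List.getElem?_drop]

lemma occursAt4_iff (p : List Bool) (i : ℕ) (a b c d : Bool) :
    OccursAt [a, b, c, d] p i ↔
      p[i]? = some a ∧ p[i + 1]? = some b ∧ p[i + 2]? = some c ∧ p[i + 3]? = some d := by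
  unfold OccursAt
  rw [show ([a, b, c, d] : List Bool).length = 4 from rfl, take4_iff]
  simp [List.getElem?_drop]

lemma occ_congr {p q : List Bool} {i : ℕ} {a b c : Bool}
    (h0 : p[i]? = q[i]?) (h1 : p[i + 1]? = q[i + 1]?) (h2 : p[i + 2]? = q[i + 2]?) :
    OccursAt [a, b, c] p i ↔ OccursAt [a, b, c] q i := by
  rw [occursAt3_iff, occursAt3_iff, h0, h1, h2]

end UduAux

namespace UduAux

lemma occ_shift {x T : List Bool} {τ : List Bool} {i : ℕ} (hi : x.length ≤ i) :
    OccursAt τ (x ++ T) i ↔ OccursAt τ T (i - x.length) := by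
  unfold OccursAt
  rw [List.drop_append, List.drop_eq_nil_of_le hi, List.nil_append]

lemma suffix_replace {x T W : List Bool} (hlen : T.length = W.length)
    (hT0 : T[0]? = some true) (hW0 : W[0]? = some true)
    (h : ∀ i, OccursAt [true, false, true] T i ↔ OccursAt [true, false, true] W i) :
    ∀ i, OccursAt [true, false, true] (x ++ T) i ↔ OccursAt [true, false, true] (x ++ W) i := by
  intro i
  rcases Nat.lt_or_ge i x.length with hx | hx
  · -- i < |x|
    rcases Nat.lt_or_ge (i + 2) x.length with h2 | h2
    · exact occ_congr
        (by rw [List.getElem?_append_left (by omega), List.getElem?_append_left (by omega)])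
        (by rw [List.getElem?_append_left (by omega), List.getElem?_append_left (by omega)])
        (by rw [List.getElem?_append_left (by omega), List.getElem?_append_left (by omega)])
    · rcases Nat.lt_or_ge (i + 1) x.length with h1 | h1
      · -- i = |x| - 2 : third letter is T[0]? = W[0]?
        have e2 : i + 2 - x.length = 0 := by omega
        exact occ_congr
          (by rw [List.getElem?_append_left (by omega), List.getElem?_append_left (by omega)])
          (by rw [List.getElem?_append_left (by omega), List.getElem?_append_left (by omega)])
          (by rw [List.getElem?_append_right (by omega), List.getElem?_append_right (by omega),
                e2, hT0, hW0])
      · -- i = |x| - 1 : middle letter is T[0]? = some true, kills both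
        have e1 : i + 1 - x.length = 0 := by omega
        rw [occursAt3_iff, occursAt3_iff]
        constructor <;> rintro ⟨-, hmid, -⟩ <;> exfalso <;>
          rw [List.getElem?_append_right (by omega), e1] at hmid
        · rw [hT0] at hmid; simp at hmid
        · rw [hW0] at hmid; simp at hmid
  · rw [occ_shift hx, occ_shift hx]
    exact h _

lemma prefix_replace {a A R : List Bool} (hlen : a.length = A.length)
    (ha1 : a[a.length - 1]? = some false) (ha2 : a[a.length - 2]? = some false)
    (hA1 : A[a.length - 1]? = some false) (hA2 : A[a.length - 2]? = some false)
    (hn : 2 ≤ a.length)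
    (h : ∀ i, OccursAt [true, false, true] a i ↔ OccursAt [true, false, true] A i) :
    ∀ i, OccursAt [true, false, true] (a ++ R) i ↔ OccursAt [true, false, true] (A ++ R) i := by
  intro i
  rcases Nat.lt_or_ge i (a.length - 2) with hx | hx
  · -- whole window inside a / A
    have hcongr : ∀ p q : List Bool, p.length = a.length →
        (∀ j, OccursAt [true, false, true] p j) → True := fun _ _ _ _ => trivial
    have h3 : i + 2 < a.length := by omega
    have := h i
    rw [occursAt3_iff, occursAt3_iff] at this
    rw [occursAt3_iff, occursAt3_iff,
      List.getElem?_append_left (by omega), List.getElem?_append_left (by omega),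
      List.getElem?_append_left (by omega), List.getElem?_append_left (by omega),
      List.getElem?_append_left (by omega), List.getElem?_append_left (by omega)]
    exact this
  · rcases Nat.lt_or_ge i a.length with hy | hy
    · -- i = len-2 or len-1 : first letter is false on both sides
      have hfalse : (a ++ R)[i]? = some false := by
        rw [List.getElem?_append_left (by omega)]
        rcases Nat.lt_or_ge i (a.length - 1) with hz | hz
        · rw [show i = a.length - 2 by omega]; exact ha2
        · rw [show i = a.length - 1 by omega]; exact ha1
      have hfalse' : (A ++ R)[i]? = some false := by
        rw [List.getElem?_append_left (by omega)]
        rcases Nat.lt_or_ge i (a.length - 1) with hz | hz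
        · rw [show i = a.length - 2 by omega]; exact hA2
        · rw [show i = a.length - 1 by omega]; exact hA1
      rw [occursAt3_iff, occursAt3_iff]
      constructor <;> rintro ⟨h0, -, -⟩ <;> exfalso
      · rw [hfalse] at h0; simp at h0
      · rw [hfalse'] at h0; simp at h0
    · rw [occ_shift hy, occ_shift (hlen ▸ hy), hlen]

end UduAux

namespace UduAux

lemma lt_len {a : List Bool} {m : ℕ} {c : Bool} (h : a[m]? = some c) : m < a.length := by
  rcases List.getElem?_eq_some_iff.1 h with ⟨h', -⟩; exact h'

lemma occ_flip1 {a : List Bool} {i : ℕ}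
    (h0 : a[i]? = some false) (h1 : a[i + 1]? = some false) (h2 : a[i + 2]? = some false)
    (hprev : ∀ i', i' + 1 = i → a[i']? ≠ some false) :
    ∀ k, OccursAt [true, false, true] a k ↔ OccursAt [true, false, true] (a.set i true) k := by
  have hil : i < a.length := lt_len h0
  have gA : ∀ m, m ≠ i → (a.set i true)[m]? = a[m]? := fun m hm =>
    List.getElem?_set_ne (fun h => hm h.symm)
  have gAi : (a.set i true)[i]? = some true := by
    rw [List.getElem?_set_self hil]
  intro k
  rcases (show k + 2 < i ∨ k + 2 = i ∨ k + 1 = i ∨ k = i ∨ i < k by omega)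
    with h | h | h | h | h
  · exact occ_congr (gA k (by omega)).symm (gA (k+1) (by omega)).symm (gA (k+2) (by omega)).symm
  · -- k + 2 = i
    simp only [occursAt3_iff]
    constructor <;> rintro ⟨p0, p1, p2⟩ <;> exfalso
    · rw [h, h0] at p2; simp at p2
    · rw [gA (k+1) (by omega)] at p1
      exact hprev (k+1) (by omega) p1
  · -- k + 1 = i, so k + 2 = i + 1
    simp only [occursAt3_iff]
    constructor <;> rintro ⟨p0, p1, p2⟩ <;> exfalso
    · rw [show k + 2 = i + 1 by omega, h1] at p2; simp at p2
    · rw [gA (k+2) (by omega), show k + 2 = i + 1 by omega, h1] at p2; simp at p2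
  · -- k = i
    simp only [occursAt3_iff]
    constructor <;> rintro ⟨p0, p1, p2⟩ <;> exfalso
    · rw [h, h0] at p0; simp at p0
    · rw [gA (k+2) (by omega), show k + 2 = i + 2 by omega, h2] at p2; simp at p2
  · exact occ_congr (gA k (by omega)).symm (gA (k+1) (by omega)).symm (gA (k+2) (by omega)).symm

lemma occ_flip2a {a : List Bool} {i : ℕ}
    (h0 : a[i]? = some false) (h1 : a[i + 1]? = some false)
    (hprev : ∀ i', i' + 1 = i → a[i']? ≠ some false)
    (hnext : a[i + 2]? ≠ some false) :
    ∀ k, OccursAt [true, false, true] a k ↔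
      OccursAt [true, false, true] ((a.set i true).set (i + 1) true) k := by
  have hil : i < a.length := lt_len h0
  have hil1 : i + 1 < a.length := lt_len h1
  set A := (a.set i true).set (i + 1) true with hA
  have gA : ∀ m, m ≠ i → m ≠ i + 1 → A[m]? = a[m]? := by
    intro m hm hm1
    rw [hA, List.getElem?_set_ne (fun h => hm1 h.symm), List.getElem?_set_ne (fun h => hm h.symm)]
  have gAi : A[i]? = some true := by
    rw [hA, List.getElem?_set_ne (by omega), List.getElem?_set_self hil]
  have gAi1 : A[i + 1]? = some true := by
    rw [hA, List.getElem?_set_self (by simpa using hil1)]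
  intro k
  rcases (show k + 2 < i ∨ k + 2 = i ∨ k + 1 = i ∨ k = i ∨ k = i + 1 ∨ i + 1 < k by omega)
    with h | h | h | h | h | h
  · exact occ_congr (gA k (by omega) (by omega)).symm (gA (k+1) (by omega) (by omega)).symm
      (gA (k+2) (by omega) (by omega)).symm
  · -- k + 2 = i : third letter
    simp only [occursAt3_iff]
    constructor <;> rintro ⟨p0, p1, p2⟩ <;> exfalso
    · rw [h, h0] at p2; simp at p2
    · rw [gA (k+1) (by omega) (by omega)] at p1
      exact hprev (k+1) (by omega) p1
  · -- k + 1 = i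
    simp only [occursAt3_iff]
    constructor <;> rintro ⟨p0, p1, p2⟩ <;> exfalso
    · rw [show k + 2 = i + 1 by omega, h1] at p2; simp at p2
    · rw [show k + 1 = i by omega, gAi] at p1; simp at p1
  · -- k = i
    simp only [occursAt3_iff]
    constructor <;> rintro ⟨p0, p1, p2⟩ <;> exfalso
    · rw [h, h0] at p0; simp at p0
    · rw [show k + 1 = i + 1 by omega, gAi1] at p1; simp at p1
  · -- k = i + 1
    simp only [occursAt3_iff]
    constructor <;> rintro ⟨p0, p1, p2⟩ <;> exfalso
    · rw [h, h1] at p0; simp at p0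
    · rw [gA (k+1) (by omega) (by omega), show k + 1 = i + 2 by omega] at p1
      exact hnext p1
  · exact occ_congr (gA k (by omega) (by omega)).symm (gA (k+1) (by omega) (by omega)).symm
      (gA (k+2) (by omega) (by omega)).symm

lemma occ_flip2b {p : List Bool} {j : ℕ}
    (h0 : p[j]? = some true) (h1 : p[j + 1]? = some true)
    (h2 : p[j + 2]? = some false) (h3 : p[j + 3]? = some false) :
    ∀ k, OccursAt [true, false, true] p k ↔
      OccursAt [true, false, true] (p.set (j + 1) false) k := by
  have hjl : j + 1 < p.length := lt_len h1
  set A := p.set (j + 1) false with hA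
  have gA : ∀ m, m ≠ j + 1 → A[m]? = p[m]? := fun m hm =>
    List.getElem?_set_ne (fun h => hm h.symm)
  have gAj : A[j + 1]? = some false := by
    rw [hA, List.getElem?_set_self hjl]
  intro k
  rcases (show k + 2 < j + 1 ∨ k + 2 = j + 1 ∨ k + 1 = j + 1 ∨ k = j + 1 ∨ j + 1 < k by omega)
    with h | h | h | h | h
  · exact occ_congr (gA k (by omega)).symm (gA (k+1) (by omega)).symm (gA (k+2) (by omega)).symm
  · -- k + 2 = j + 1, middle is p[j]? = true : kills both
    simp only [occursAt3_iff]
    constructor <;> rintro ⟨p0, p1, p2⟩ <;> exfalso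
    · rw [show k + 1 = j by omega, h0] at p1; simp at p1
    · rw [gA (k+1) (by omega), show k + 1 = j by omega, h0] at p1; simp at p1
  · -- k = j
    simp only [occursAt3_iff]
    constructor <;> rintro ⟨p0, p1, p2⟩ <;> exfalso
    · rw [show k + 1 = j + 1 by omega, h1] at p1; simp at p1
    · rw [gA (k+2) (by omega), show k + 2 = j + 2 by omega, h2] at p2; simp at p2
  · -- k = j + 1
    simp only [occursAt3_iff]
    constructor <;> rintro ⟨p0, p1, p2⟩ <;> exfalso
    · rw [show k + 2 = j + 3 by omega, h3] at p2; simp at p2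
    · rw [h, gAj] at p0; simp at p0
  · exact occ_congr (gA k (by omega)).symm (gA (k+1) (by omega)).symm (gA (k+2) (by omega)).symm

end UduAux

namespace UduAux

lemma occ_tail (b1 : List Bool) :
    ∀ k, OccursAt [true, false, true] (true :: true :: true :: true :: b1) k ↔
         OccursAt [true, false, true] (true :: false :: false :: true :: b1) k := by
  intro k
  match k with
  | 0 => simp [occursAt3_iff]
  | 1 => simp [occursAt3_iff]
  | 2 => simp [occursAt3_iff]
  | (k + 3) =>
    unfold OccursAt
    have e1 : (true :: true :: true :: true :: b1).drop (k + 3)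
        = (true :: b1).drop k := rfl
    have e2 : (true :: false :: false :: true :: b1).drop (k + 3)
        = (true :: b1).drop k := rfl
    rw [e1, e2]

lemma ballot_flip_up {u v : List Bool} (h : IsBallot (u ++ false :: v)) :
    IsBallot (u ++ true :: v) := by
  intro k
  have hk := h k
  rw [List.take_append] at hk ⊢
  rcases Nat.eq_zero_or_pos (k - u.length) with h0 | h0
  · rw [h0] at hk ⊢; simpa using hk
  · obtain ⟨s, hs⟩ : ∃ s, k - u.length = s + 1 := ⟨k - u.length - 1, by omega⟩
    rw [hs, List.take_succ_cons] at hk ⊢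
    simp [List.count_append, List.count_cons] at hk ⊢
    omega

end UduAux

namespace UduAux

lemma ballot_case2 {u w v : List Bool}
    (h : IsBallot (u ++ false :: false :: (w ++ true :: v))) :
    IsBallot (u ++ true :: true :: (w ++ false :: v)) := by
  intro k
  have hk := h k
  rw [List.take_append] at hk ⊢
  rcases (show k - u.length = 0 ∨ k - u.length = 1 ∨ 2 ≤ k - u.length by omega)
    with h0 | h0 | h2
  · rw [h0] at hk ⊢; simpa using hk
  · rw [h0] at hk ⊢
    simp [List.count_append, List.count_cons] at hk ⊢
    omega
  · obtain ⟨s, hs⟩ : ∃ s, k - u.length = s + 2 := ⟨k - u.length - 2, by omega⟩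
    rw [hs, List.take_succ_cons, List.take_succ_cons] at hk ⊢
    rw [List.take_append] at hk ⊢
    rcases Nat.eq_zero_or_pos (s - w.length) with h1 | h1
    · rw [h1] at hk ⊢
      simp [List.count_append, List.count_cons] at hk ⊢
      omega
    · obtain ⟨t, ht⟩ : ∃ t, s - w.length = t + 1 := ⟨s - w.length - 1, by omega⟩
      rw [ht, List.take_succ_cons] at hk ⊢
      simp [List.count_append, List.count_cons] at hk ⊢
      omega

lemma M_count (r : ℕ) (b : Bool) :
    ((List.replicate r ([true, false] : List Bool)).flatten).count b = r := by
  induction r with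
  | zero => simp
  | succ n ih =>
    rw [List.replicate_succ, List.flatten_cons, List.count_append, ih]
    cases b <;> simp [List.count_cons] <;> omega

lemma M_ballot (r : ℕ) : IsBallot ((List.replicate r ([true, false] : List Bool)).flatten) := by
  induction r with
  | zero => intro k; simp
  | succ n ih =>
    rw [List.replicate_succ, List.flatten_cons, List.cons_append, List.cons_append,
      List.nil_append]
    intro k
    match k with
    | 0 => simp
    | 1 => simp
    | (k + 2) =>
      have := ih k
      rw [List.take_succ_cons, List.take_succ_cons]
      simp [List.count_cons] at this ⊢
      omega

lemma W_take {b1 : List Bool} (hb : IsBallot (true :: true :: b1)) :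
    ∀ s, ((true :: false :: false :: true :: b1).take s).count false
        ≤ ((true :: false :: false :: true :: b1).take s).count true + 2 := by
  intro s
  match s with
  | 0 => simp
  | 1 => simp
  | 2 => simp [List.count_cons]
  | 3 => simp [List.count_cons]
  | (s + 4) =>
    have hk := hb (s + 2)
    rw [List.take_succ_cons, List.take_succ_cons] at hk
    rw [List.take_succ_cons, List.take_succ_cons, List.take_succ_cons, List.take_succ_cons]
    simp [List.count_cons] at hk ⊢
    omega

lemma ballot_assemble {A M W : List Bool} (hA : IsBallot A)
    (hAc : A.count true = A.count false + 2)
    (hM : IsBallot M) (hMc : M.count true = M.count false)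
    (hW : ∀ s, (W.take s).count false ≤ (W.take s).count true + 2) :
    IsBallot (A ++ (M ++ W)) := by
  intro k
  rw [List.take_append]
  simp only [List.count_append]
  rcases le_or_gt k A.length with hk | hk
  · rw [Nat.sub_eq_zero_of_le hk]
    simpa using hA k
  · rw [List.take_of_length_le (by omega : A.length ≤ k)]
    rw [List.take_append]
    simp only [List.count_append]
    rcases le_or_gt (k - A.length) M.length with hm | hm
    · rw [Nat.sub_eq_zero_of_le hm]
      have h1 := hM (k - A.length)
      simp at h1 ⊢
      omega
    · rw [List.take_of_length_le (by omega : M.length ≤ k - A.length)]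
      have h1 := hW (k - A.length - M.length)
      simp at h1 ⊢
      omega

lemma decomp_at {a : List Bool} {m : ℕ} {c : Bool} (h : a[m]? = some c) :
    a = a.take m ++ c :: a.drop (m + 1) := by
  obtain ⟨hlt, hval⟩ := List.getElem?_eq_some_iff.1 h
  calc a = a.take m ++ a.drop m := (List.take_append_drop m a).symm
    _ = a.take m ++ c :: a.drop (m + 1) := by
        rw [← List.getElem_cons_drop hlt, hval]

end UduAux


open UduAux in
/-- if `α, β` are Dyck paths, `β` begins with UU, `α` ends with DD and
`α` has an occurrence of DDD or an occurrence of DD before an occurrence of UUDD,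
then `α (UD)^r UU β` is UDU-equivalent to a Dyck path (for `r ≥ 1`). -/
theorem udu_second_form_equiv_dyck (r : ℕ) (hr : 1 ≤ r) (α β : List Bool)
    (hα : IsDyck α) (hβ : IsDyck β)
    (hβstart : [true, true] <+: β)
    (hαend : [false, false] <:+ α)
    (hcond : [false, false, false] <:+: α ∨
      ∃ i j : ℕ, i < j ∧ OccursAt [false, false] α i ∧
        OccursAt [true, true, false, false] α j) :
    ∃ q : List Bool, IsDyck q ∧
      PathEquiv [true, false, true]
        (α ++ (List.replicate r [true, false]).flatten ++ [true, true] ++ β) q := by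
  classical
  obtain ⟨w0, hw0⟩ := hαend
  obtain ⟨b1, hb1⟩ := hβstart
  have hβ' : β = true :: true :: b1 := by rw [← hb1]; rfl
  have hn : α.length = w0.length + 2 := by rw [← hw0]; simp
  have hαlast2 : α[α.length - 2]? = some false := by
    have e : (w0 ++ [false, false] : List Bool).length - 2 = w0.length := by simp
    rw [← hw0, e, List.getElem?_append_right (le_refl _), Nat.sub_self]
    rfl
  have hαlast1 : α[α.length - 1]? = some false := by
    have e : (w0 ++ [false, false] : List Bool).length - 1 = w0.length + 1 := by
      simp
    rw [← hw0, e, List.getElem?_append_right (by omega),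
      show w0.length + 1 - w0.length = 1 by omega]
    rfl
  -- the two cases produce a modified prefix A
  have key : ∃ A : List Bool, A.length = α.length ∧
      (∀ k, OccursAt [true, false, true] α k ↔ OccursAt [true, false, true] A k) ∧
      A[α.length - 1]? = some false ∧ A[α.length - 2]? = some false ∧
      IsBallot A ∧ A.count true = A.count false + 2 := by
    by_cases hD3 : ∃ i, α[i]? = some false ∧ α[i + 1]? = some false ∧ α[i + 2]? = some false
    · -- Case 1 : α contains DDD; flip the first D of the first DDD
      set i := Nat.find hD3 with hidef
      obtain ⟨h0, h1, h2⟩ := Nat.find_spec hD3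
      have hprev : ∀ i', i' + 1 = i → α[i']? ≠ some false := by
        intro i' hi' hc
        exact Nat.find_min hD3 (show i' < i by omega)
          ⟨hc, by rw [hi']; exact h0, by rw [show i' + 1 + 1 = i + 1 by omega]; exact h1⟩
      have hil2 : i + 2 < α.length := lt_len h2
      have hd := decomp_at h0
      have hs := List.set_eq_take_cons_drop true (lt_len h0)
      refine ⟨α.set i true, by simp, occ_flip1 h0 h1 h2 hprev, ?_, ?_, ?_, ?_⟩
      · rw [List.getElem?_set_ne (by omega)]; exact hαlast1
      · rw [List.getElem?_set_ne (by omega)]; exact hαlast2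
      · rw [hs]; exact ballot_flip_up (by rw [← hd]; exact hα.1)
      · have hc := hα.2
        rw [hd] at hc
        rw [hs]
        simp [List.count_append, List.count_cons] at hc ⊢
        omega
    · -- Case 2 : no DDD; use DD at i and UUDD at j
      have hcond2 : ∃ i j, i < j ∧ OccursAt [false, false] α i ∧
          OccursAt [true, true, false, false] α j := by
        rcases hcond with hinf | h2
        · exfalso
          obtain ⟨s, t, hst⟩ := hinf
          refine hD3 ⟨s.length, ?_, ?_, ?_⟩ <;> rw [← hst]
          · rw [List.getElem?_append_left
                (by simp only [List.length_append, List.length_cons, List.length_nil]; omega),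
              List.getElem?_append_right (le_refl _), Nat.sub_self]
            rfl
          · rw [List.getElem?_append_left
                (by simp only [List.length_append, List.length_cons, List.length_nil]; omega),
              List.getElem?_append_right (by omega),
              show s.length + 1 - s.length = 1 by omega]
            rfl
          · rw [List.getElem?_append_left
                (by simp only [List.length_append, List.length_cons, List.length_nil]; omega),
              List.getElem?_append_right (by omega),
              show s.length + 2 - s.length = 2 by omega]
            rfl
        · exact h2
      obtain ⟨i, j, hij, hDD, hUUDD⟩ := hcond2
      rw [occursAt2_iff] at hDD
      obtain ⟨h0, h1⟩ := hDD
      rw [occursAt4_iff] at hUUDD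
      obtain ⟨g0, g1, g2, g3⟩ := hUUDD
      have hprev : ∀ i', i' + 1 = i → α[i']? ≠ some false := fun i' hi' hc =>
        hD3 ⟨i', hc, by rw [hi']; exact h0, by rw [show i' + 1 + 1 = i + 1 by omega]; exact h1⟩
      have hnext : α[i + 2]? ≠ some false := fun hc => hD3 ⟨i, h0, h1, hc⟩
      have hij1 : i + 1 < j := by
        rcases Nat.lt_or_ge (i + 1) j with h | h
        · exact h
        · exfalso
          have hj : i + 1 = j := by omega
          rw [hj, g0] at h1
          simp at h1
      have hjn : j + 3 < α.length := lt_len g3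
      have hin : i + 1 < α.length := lt_len h1
      set a2 := (α.set i true).set (i + 1) true with ha2def
      have ga2 : ∀ m, m ≠ i → m ≠ i + 1 → a2[m]? = α[m]? := by
        intro m hm hm1
        rw [ha2def, List.getElem?_set_ne (fun h => hm1 h.symm),
          List.getElem?_set_ne (fun h => hm h.symm)]
      have occ1 := occ_flip2a h0 h1 hprev hnext
      have occ2 := occ_flip2b (p := a2) (j := j)
        (by rw [ga2 j (by omega) (by omega)]; exact g0)
        (by rw [ga2 (j + 1) (by omega) (by omega)]; exact g1)
        (by rw [ga2 (j + 2) (by omega) (by omega)]; exact g2)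
        (by rw [ga2 (j + 3) (by omega) (by omega)]; exact g3)
      set A := a2.set (j + 1) false with hAdef
      have gA : ∀ m, m ≠ i → m ≠ i + 1 → m ≠ j + 1 → A[m]? = α[m]? := by
        intro m hm hm1 hmj
        rw [hAdef, List.getElem?_set_ne (fun h => hmj h.symm)]
        exact ga2 m hm hm1
      -- decompositions
      set u := α.take i with hudef
      set w := (α.drop (i + 2)).take (j - i - 1) with hwdef
      set v := α.drop (j + 2) with hvdef
      have hu_len : u.length = i := by
        rw [hudef, List.length_take]; omega
      have hw_len : w.length = j - i - 1 := by
        rw [hwdef, List.length_take, List.length_drop]; omega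
      have hdrop1 : α.drop (i + 1) = false :: α.drop (i + 2) := by
        obtain ⟨hlt1, hval1⟩ := List.getElem?_eq_some_iff.1 h1
        rw [← List.getElem_cons_drop hlt1, hval1]
      have hdropj : α.drop (j + 1) = true :: α.drop (j + 2) := by
        obtain ⟨hlt1, hval1⟩ := List.getElem?_eq_some_iff.1 g1
        rw [← List.getElem_cons_drop hlt1, hval1]
      have hdecomp : α = u ++ false :: false :: (w ++ true :: v) := by
        calc α = α.take i ++ false :: α.drop (i + 1) := decomp_at h0
          _ = α.take i ++ false :: false :: α.drop (i + 2) := by rw [hdrop1]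
          _ = α.take i ++ false :: false ::
              ((α.drop (i + 2)).take (j - i - 1) ++ (α.drop (i + 2)).drop (j - i - 1)) := by
                rw [List.take_append_drop]
          _ = u ++ false :: false :: (w ++ α.drop (j + 1)) := by
                rw [List.drop_drop, show i + 2 + (j - i - 1) = j + 1 by omega]
          _ = u ++ false :: false :: (w ++ true :: v) := by rw [hdropj]
      have hAdecomp : A = u ++ true :: true :: (w ++ false :: v) := by
        rw [hAdef, ha2def]
        conv_lhs => rw [hdecomp]
        rw [List.set_append_right _ _ (by omega : u.length ≤ i), hu_len, Nat.sub_self,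
          List.set_cons_zero]
        rw [List.set_append_right _ _ (by omega : u.length ≤ i + 1), hu_len,
          show i + 1 - i = 1 by omega, List.set_cons_succ, List.set_cons_zero]
        rw [List.set_append_right _ _ (by omega : u.length ≤ j + 1), hu_len,
          show j + 1 - i = (j - i - 1) + 2 by omega, List.set_cons_succ, List.set_cons_succ]
        rw [List.set_append_right _ _ (by omega : w.length ≤ j - i - 1), hw_len, Nat.sub_self,
          List.set_cons_zero]
      refine ⟨A, by simp [hAdef, ha2def], fun k => (occ1 k).trans (occ2 k), ?_, ?_, ?_, ?_⟩
      · rw [gA _ (by omega) (by omega) (by omega)]; exact hαlast1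
      · rw [gA _ (by omega) (by omega) (by omega)]; exact hαlast2
      · rw [hAdecomp]
        exact ballot_case2 (by rw [← hdecomp]; exact hα.1)
      · have hc := hα.2
        rw [hdecomp] at hc
        rw [hAdecomp]
        simp [List.count_append, List.count_cons] at hc ⊢
        omega
  -- common construction
  obtain ⟨A, hlenA, occA, hA1, hA2, hAb, hAc⟩ := key
  set M := (List.replicate r ([true, false] : List Bool)).flatten with hMdef
  set W := (true :: false :: false :: true :: b1 : List Bool) with hWdef
  refine ⟨A ++ (M ++ W), ⟨?_, ?_⟩, ?_, ?_⟩
  · -- ballot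
    refine ballot_assemble hAb hAc (M_ballot r) (by rw [M_count, M_count]) ?_
    exact W_take (by rw [hβ'] at hβ; exact hβ.1)
  · -- counts
    have hβc := hβ.2
    rw [hβ'] at hβc
    have hM1 : M.count true = r := M_count r true
    have hM2 : M.count false = r := M_count r false
    simp only [List.count_append, List.count_cons, hWdef] at hβc ⊢
    simp only [hM1, hM2]
    simp at hβc ⊢
    omega
  · -- lengths
    have hβlen : β.length = b1.length + 2 := by rw [hβ']; simp
    simp [List.length_append, hlenA, hWdef, hMdef]
    omega
  · intro k
    have hP : α ++ (List.replicate r ([true, false] : List Bool)).flatten ++ [true, true] ++ β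
        = (α ++ M) ++ (true :: true :: true :: true :: b1) := by
      rw [hβ']
      simp [List.append_assoc, hMdef]
    rw [hP]
    have step1 := suffix_replace (x := α ++ M) (T := true :: true :: true :: true :: b1)
      (W := W) (by simp [hWdef]) rfl rfl (occ_tail b1) k
    have hQ : (α ++ M) ++ W = α ++ (M ++ W) := by rw [List.append_assoc]
    rw [hQ] at step1
    have step2 := prefix_replace (a := α) (A := A) (R := M ++ W) hlenA.symm
      hαlast1 hαlast2 hA1 hA2 (by omega) occA k
    exact step1.trans step2
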